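/- Let Σ be a finite alphabet, N ≥ 1, T = 2^{N+1}+1, and let p_1, …, p_k ∈ Σ* and l_1, …, l_k ∈ Σ^+. Let n, n' ∈ ℕ^{k−1} be such that min(n_i, T) = min(n'_i, T) for every i ∈ {1,…,k−1}. Then p_1 l_1^{n_1} ⋯ p_{k−1} l_{k−1}^{n_{k−1}} p_k l_k^ω ≡_N p_1 l_1^{n'_1} ⋯ p_{k−1} l_{k−1}^{n'_{k−1}} p_k l_k^ω. -/

import Mathlib

namespace Stmt2

variable {Γ : Type*}

/-- `m`-fold concatenation of a finite word. -/
def lpow (u : List Γ) : ℕ → List Γ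
  | 0 => []
  | m + 1 => u ++ lpow u m

/-- Concatenation of a finite word with an ω-word. -/
def wcat (u : List Γ) (w : ℕ → Γ) : ℕ → Γ := fun n =>
  if h : n < u.length then u.get ⟨n, h⟩ else w (n - u.length)

/-- Syntax of first-order logic `FO_Γ` over ω-words over `Γ`:
variables are natural numbers (interpreted as positions), atomic formulas are
`a(z)` for each letter `a`, `S(z,z')`, `z < z'` and `z = z'`,
closed under `¬`, `∧` and `∃`. -/
inductive FO (Γ : Type*) : Type _
  | letter : Γ → ℕ → FO Γ
  | succ : ℕ → ℕ → FO Γ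
  | lt : ℕ → ℕ → FO Γ
  | eq : ℕ → ℕ → FO Γ
  | not : FO Γ → FO Γ
  | and : FO Γ → FO Γ → FO Γ
  | ex : ℕ → FO Γ → FO Γ

/-- Satisfaction of an FO formula on an ω-word under an assignment of variables
to positions. -/
def FO.Sat (w : ℕ → Γ) : FO Γ → (ℕ → ℕ) → Prop
  | .letter a z, f => w (f z) = a
  | .succ z z', f => f z' = f z + 1
  | .lt z z', f => f z < f z'
  | .eq z z', f => f z = f z'
  | .not φ, f => ¬ FO.Sat w φ f
  | .and φ ψ, f => FO.Sat w φ f ∧ FO.Sat w ψ f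
  | .ex z φ, f => ∃ pos : ℕ, FO.Sat w φ (Function.update f z pos)

/-- Quantifier height: maximal nesting depth of `∃`. -/
def FO.qh : FO Γ → ℕ
  | .letter _ _ => 0
  | .succ _ _ => 0
  | .lt _ _ => 0
  | .eq _ _ => 0
  | .not φ => FO.qh φ
  | .and φ ψ => max (FO.qh φ) (FO.qh ψ)
  | .ex _ φ => FO.qh φ + 1

/-- Free variables of an FO formula. -/
def FO.free : FO Γ → Finset ℕ
  | .letter _ z => {z}
  | .succ z z' => {z, z'}
  | .lt z z' => {z, z'}
  | .eq z z' => {z, z'}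
  | .not φ => FO.free φ
  | .and φ ψ => FO.free φ ∪ FO.free ψ
  | .ex z φ => (FO.free φ).erase z

/-- Satisfaction of a sentence (the assignment is irrelevant, so we fix one). -/
def FO.SatS (w : ℕ → Γ) (φ : FO Γ) : Prop := FO.Sat w φ fun _ => 0

/-- `w ≡_n w'`: the two ω-words satisfy exactly the same FO sentences
of quantifier height at most `n`. -/
def FOEquiv (n : ℕ) (w w' : ℕ → Γ) : Prop :=
  ∀ φ : FO Γ, FO.free φ = ∅ → FO.qh φ ≤ n → (FO.SatS w φ ↔ FO.SatS w' φ)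

/-- Infinite repetition of a nonempty finite word. -/
def womega (u : List Γ) (hu : u ≠ []) : ℕ → Γ := fun n =>
  u.get ⟨n % u.length, Nat.mod_lt _ (List.length_pos_iff.mpr hu)⟩

/-- The finite word `p 0 · (l 0)^(n 0) · ⋯ · p (i-1) · (l (i-1))^(n (i-1))`. -/
def schemaPrefix (p l : ℕ → List Γ) (n : ℕ → ℕ) : ℕ → List Γ
  | 0 => []
  | i + 1 => schemaPrefix p l n i ++ (p i ++ lpow (l i) (n i))

/-- The ω-word `p_1 l_1^{n_1} ⋯ p_{k-1} l_{k-1}^{n_{k-1}} p_k l_k^ω`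
(with `0`-based indexing of the segments `p` and loops `l`). -/
def schemaWord (k : ℕ) (p l : ℕ → List Γ) (n : ℕ → ℕ) (h : l (k - 1) ≠ []) : ℕ → Γ :=
  wcat (schemaPrefix p l n (k - 1) ++ p (k - 1)) (womega (l (k - 1)) h)


/-! ### Auxiliary machinery: an Ehrenfeucht–Fraïssé style argument -/

namespace StutterAux

/-- The distance threshold used for `r` remaining quantifier rounds. -/
def E (L r : ℕ) : ℕ := 2 ^ r * (L + 1) + 1

lemma E_lb (L r : ℕ) : L + 2 ≤ E L r := by
  have h : 1 ≤ 2 ^ r := Nat.one_le_two_pow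
  have := Nat.mul_le_mul_right (L + 1) h
  simp only [E]; omega

lemma E_succ (L r : ℕ) : E L (r + 1) = 2 * E L r - 1 := by
  simp only [E, pow_succ]
  have : 2 ^ r * 2 * (L + 1) = 2 * (2 ^ r * (L + 1)) := by ring
  omega

lemma E_mono (L : ℕ) {r s : ℕ} (h : r ≤ s) : E L r ≤ E L s := by
  have := Nat.pow_le_pow_right (by norm_num : 1 ≤ 2) h
  have := Nat.mul_le_mul_right (L + 1) this
  simp only [E]; omega

/-- Validity of a matched position: `a` is a position in the longer word `w`,
`ε` tells whether it is matched to `a` (far from the right anchor) or to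
`a - L` (far from the left anchor) in the shorter word `w'`. -/
def pok (P L M t a : ℕ) (ε : Bool) : Prop :=
  if ε then P + L + t ≤ a + 1 else a + t ≤ P + M + L

def pproj (L a : ℕ) (ε : Bool) : ℕ := if ε then a - L else a

/-- Compatibility of two matched positions: if matched on different sides,
they must be far apart. -/
def pcompat (t a : ℕ) (ε : Bool) (a' : ℕ) (ε' : Bool) : Prop :=
  if ε = ε' then True else if ε then a' + t ≤ a else a + t ≤ a'

lemma pcompat_symm {t a a' : ℕ} {ε ε' : Bool} (h : pcompat t a ε a' ε') :
    pcompat t a' ε' a ε := by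
  cases ε <;> cases ε' <;> simp_all [pcompat]

lemma pcompat_refl (t a : ℕ) (ε : Bool) : pcompat t a ε a ε := by simp [pcompat]

lemma pok_mono {P L M t t' a : ℕ} {ε : Bool} (h : t' ≤ t) (hp : pok P L M t a ε) :
    pok P L M t' a ε := by
  cases ε <;> simp [pok] at hp ⊢ <;> omega

lemma pcompat_mono {t t' a a' : ℕ} {ε ε' : Bool} (h : t' ≤ t) (hp : pcompat t a ε a' ε') :
    pcompat t' a ε a' ε' := by
  cases ε <;> cases ε' <;> simp [pcompat] at hp ⊢ <;> omega

section Game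

variable {Γ' : Type*} {w w' : ℕ → Γ'} {P L M : ℕ}

lemma letters (hL : 1 ≤ L) (h1 : ∀ q, q < P + M → w q = w' q)
    (h2 : ∀ q, P ≤ q → w (q + L) = w' q) {t a : ℕ} {ε : Bool}
    (ht : L + 2 ≤ t) (h : pok P L M t a ε) : w a = w' (pproj L a ε) := by
  cases ε
  · simp [pok] at h
    simp only [pproj, Bool.false_eq_true, if_false]
    exact h1 a (by omega)
  · simp [pok] at h
    simp only [pproj, if_true]
    have hp : P ≤ a - L := by omega
    have := h2 (a - L) hp
    rwa [Nat.sub_add_cancel (by omega)] at this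

lemma atoms (hL : 1 ≤ L) {t a a' : ℕ} {ε ε' : Bool} (ht : L + 2 ≤ t)
    (h : pok P L M t a ε) (h' : pok P L M t a' ε') (hc : pcompat t a ε a' ε') :
    (a < a' ↔ pproj L a ε < pproj L a' ε') ∧ (a = a' ↔ pproj L a ε = pproj L a' ε') ∧
      (a' = a + 1 ↔ pproj L a' ε' = pproj L a ε + 1) := by
  cases ε <;> cases ε' <;> simp [pok, pproj, pcompat] at * <;> omega

lemma exists_witness {r : ℕ} (hM : E L (r + 1) ≤ M + 1) (S : Finset ℕ) (g : ℕ → ℕ)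
    (e : ℕ → Bool)
    (hok : ∀ z ∈ S, pok P L M (E L (r + 1)) (g z) (e z))
    (hcp : ∀ z ∈ S, ∀ z' ∈ S, pcompat (E L (r + 1)) (g z) (e z) (g z') (e z')) (a : ℕ)
    (h0 : ¬(a + E L r ≤ P + M + L ∧ ∀ z ∈ S, e z = true → a + E L r ≤ g z)) :
    ∃ v, P + L + E L (r + 1) ≤ v + 1 ∧
      (∀ z ∈ S, e z = false → g z + E L (r + 1) ≤ v) ∧ v < a + E L r := by
  by_cases h1 : a + E L r ≤ P + M + L
  · push_neg at h0
    obtain ⟨z1, hz1, hez1, hlt⟩ := h0 h1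
    refine ⟨g z1, ?_, ?_, hlt⟩
    · have := hok z1 hz1
      simp [pok, hez1] at this
      omega
    · intro z hz hez
      have := hcp z1 hz1 z hz
      simp [pcompat, hez1, hez] at this
      omega
  · refine ⟨P + M + L, by omega, ?_, by omega⟩
    intro z hz hez
    have := hok z hz
    simp [pok, hez] at this
    omega

lemma forth {r : ℕ} (hM : E L (r + 1) ≤ M + 1) (S : Finset ℕ) (g : ℕ → ℕ) (e : ℕ → Bool)
    (hok : ∀ z ∈ S, pok P L M (E L (r + 1)) (g z) (e z))
    (hcp : ∀ z ∈ S, ∀ z' ∈ S, pcompat (E L (r + 1)) (g z) (e z) (g z') (e z')) (a : ℕ) :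
    ∃ ε, pok P L M (E L r) a ε ∧ ∀ z ∈ S, pcompat (E L r) a ε (g z) (e z) := by
  classical
  by_cases h0 : a + E L r ≤ P + M + L ∧ ∀ z ∈ S, e z = true → a + E L r ≤ g z
  · refine ⟨false, by simp [pok]; omega, ?_⟩
    intro z hz
    cases hez : e z
    · simp [pcompat, hez]
    · simp [pcompat, hez]
      exact h0.2 z hz hez
  · obtain ⟨v, hv1, hv2, hv3⟩ := exists_witness hM S g e hok hcp a h0
    have hE : E L (r + 1) = 2 * E L r - 1 := E_succ L r
    have hE1 : L + 2 ≤ E L r := E_lb L r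
    refine ⟨true, by simp [pok]; omega, ?_⟩
    intro z hz
    cases hez : e z
    · have := hv2 z hz hez
      simp [pcompat, hez]
      omega
    · simp [pcompat, hez]

lemma back {r : ℕ} (hL : 1 ≤ L) (hM : E L (r + 1) ≤ M + 1) (S : Finset ℕ) (g : ℕ → ℕ)
    (e : ℕ → Bool)
    (hok : ∀ z ∈ S, pok P L M (E L (r + 1)) (g z) (e z))
    (hcp : ∀ z ∈ S, ∀ z' ∈ S, pcompat (E L (r + 1)) (g z) (e z) (g z') (e z')) (b : ℕ) :
    ∃ a ε, pproj L a ε = b ∧ pok P L M (E L r) a ε ∧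
      ∀ z ∈ S, pcompat (E L r) a ε (g z) (e z) := by
  classical
  by_cases h0 : b + E L r ≤ P + M + L ∧ ∀ z ∈ S, e z = true → b + E L r ≤ g z
  · refine ⟨b, false, by simp [pproj], by simp [pok]; omega, ?_⟩
    intro z hz
    cases hez : e z
    · simp [pcompat, hez]
    · simp [pcompat, hez]
      exact h0.2 z hz hez
  · obtain ⟨v, hv1, hv2, hv3⟩ := exists_witness hM S g e hok hcp b h0
    have hE : E L (r + 1) = 2 * E L r - 1 := E_succ L r
    have hE1 : L + 2 ≤ E L r := E_lb L r
    refine ⟨b + L, true, by simp [pproj], by simp [pok]; omega, ?_⟩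
    intro z hz
    cases hez : e z
    · have := hv2 z hz hez
      simp [pcompat, hez]
      omega
    · simp [pcompat, hez]

lemma key (hL : 1 ≤ L) (h1 : ∀ q, q < P + M → w q = w' q)
    (h2 : ∀ q, P ≤ q → w (q + L) = w' q) (N : ℕ) (hMN : E L N ≤ M + 1) (φ : FO Γ') :
    ∀ r : ℕ, r ≤ N → FO.qh φ ≤ r → ∀ (f f' : ℕ → ℕ) (e : ℕ → Bool),
      (∀ z ∈ FO.free φ, pok P L M (E L r) (f z) (e z) ∧ f' z = pproj L (f z) (e z)) →
      (∀ z ∈ FO.free φ, ∀ z' ∈ FO.free φ, pcompat (E L r) (f z) (e z) (f z') (e z')) →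
      (FO.Sat w φ f ↔ FO.Sat w' φ f') := by
  induction φ with
  | letter a z =>
    intro r _ _ f f' e hp _
    obtain ⟨ho, hf⟩ := hp z (by simp [FO.free])
    have := letters hL h1 h2 (E_lb L r) ho
    simp only [FO.Sat, hf, this]
  | succ z z' =>
    intro r _ _ f f' e hp hc
    have m1 : z ∈ FO.free (FO.succ z z' : FO Γ') := by simp [FO.free]
    have m2 : z' ∈ FO.free (FO.succ z z' : FO Γ') := by simp [FO.free]
    obtain ⟨ho, hf⟩ := hp z m1
    obtain ⟨ho', hf'⟩ := hp z' m2
    have := (atoms hL (E_lb L r) ho ho' (hc z m1 z' m2)).2.2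
    simp only [FO.Sat, hf, hf', this]
  | lt z z' =>
    intro r _ _ f f' e hp hc
    have m1 : z ∈ FO.free (FO.lt z z' : FO Γ') := by simp [FO.free]
    have m2 : z' ∈ FO.free (FO.lt z z' : FO Γ') := by simp [FO.free]
    obtain ⟨ho, hf⟩ := hp z m1
    obtain ⟨ho', hf'⟩ := hp z' m2
    have := (atoms hL (E_lb L r) ho ho' (hc z m1 z' m2)).1
    simp only [FO.Sat, hf, hf', this]
  | eq z z' =>
    intro r _ _ f f' e hp hc
    have m1 : z ∈ FO.free (FO.eq z z' : FO Γ') := by simp [FO.free]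
    have m2 : z' ∈ FO.free (FO.eq z z' : FO Γ') := by simp [FO.free]
    obtain ⟨ho, hf⟩ := hp z m1
    obtain ⟨ho', hf'⟩ := hp z' m2
    have := (atoms hL (E_lb L r) ho ho' (hc z m1 z' m2)).2.1
    simp only [FO.Sat, hf, hf', this]
  | not φ ih =>
    intro r hr hq f f' e hp hc
    simp only [FO.Sat]
    rw [ih r hr hq f f' e hp hc]
  | and φ ψ ihφ ihψ =>
    intro r hr hq f f' e hp hc
    simp only [FO.qh, max_le_iff] at hq
    have sφ : ∀ z ∈ FO.free φ, z ∈ FO.free (FO.and φ ψ) := by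
      intro z hz; simp [FO.free, hz]
    have sψ : ∀ z ∈ FO.free ψ, z ∈ FO.free (FO.and φ ψ) := by
      intro z hz; simp [FO.free, hz]
    simp only [FO.Sat]
    rw [ihφ r hr hq.1 f f' e (fun z hz => hp z (sφ z hz))
        (fun z hz z' hz' => hc z (sφ z hz) z' (sφ z' hz')),
      ihψ r hr hq.2 f f' e (fun z hz => hp z (sψ z hz))
        (fun z hz z' hz' => hc z (sψ z hz) z' (sψ z' hz'))]
  | ex z φ ih =>
    intro r hr hq f f' e hp hc
    simp only [FO.qh] at hq
    obtain ⟨r', rfl⟩ : ∃ r', r = r' + 1 := ⟨r - 1, by omega⟩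
    have hq' : FO.qh φ ≤ r' := by omega
    have hr' : r' ≤ N := by omega
    have hM' : E L (r' + 1) ≤ M + 1 := le_trans (E_mono L hr) hMN
    have hmem : ∀ z'' ∈ (FO.free φ).erase z, z'' ∈ FO.free (FO.ex z φ) := by
      intro z'' hz''; simpa [FO.free] using hz''
    constructor
    · rintro ⟨pos, hpos⟩
      obtain ⟨ε, hok, hcp'⟩ := forth hM' ((FO.free φ).erase z) f e
        (fun z'' hz'' => (hp z'' (hmem z'' hz'')).1)
        (fun z1 hz1 z2 hz2 => hc z1 (hmem z1 hz1) z2 (hmem z2 hz2)) pos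
      refine ⟨pproj L pos ε, ?_⟩
      rw [← ih r' hr' hq' (Function.update f z pos) (Function.update f' z (pproj L pos ε))
        (Function.update e z ε) ?_ ?_]
      · exact hpos
      · intro z'' hz''
        by_cases hzz : z'' = z
        · subst hzz
          refine ⟨by simpa using hok, by simp⟩
        · rw [Function.update_of_ne hzz, Function.update_of_ne hzz, Function.update_of_ne hzz]
          have hz''e : z'' ∈ (FO.free φ).erase z := Finset.mem_erase.mpr ⟨hzz, hz''⟩
          obtain ⟨ho, hf⟩ := hp z'' (hmem z'' hz''e)
          exact ⟨pok_mono (E_mono L (by omega)) ho, hf⟩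
      · intro z1 hz1 z2 hz2
        by_cases h1z : z1 = z <;> by_cases h2z : z2 = z
        · subst h1z; subst h2z; simp only [Function.update_self]; exact pcompat_refl _ _ _
        · subst h1z
          rw [Function.update_self, Function.update_self, Function.update_of_ne h2z,
            Function.update_of_ne h2z]
          exact hcp' z2 (Finset.mem_erase.mpr ⟨h2z, hz2⟩)
        · subst h2z
          rw [Function.update_self, Function.update_self, Function.update_of_ne h1z,
            Function.update_of_ne h1z]
          exact pcompat_symm (hcp' z1 (Finset.mem_erase.mpr ⟨h1z, hz1⟩))
        · rw [Function.update_of_ne h1z, Function.update_of_ne h1z,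
            Function.update_of_ne h2z, Function.update_of_ne h2z]
          exact pcompat_mono (E_mono L (by omega))
            (hc z1 (hmem z1 (Finset.mem_erase.mpr ⟨h1z, hz1⟩))
              z2 (hmem z2 (Finset.mem_erase.mpr ⟨h2z, hz2⟩)))
    · rintro ⟨pos', hpos'⟩
      obtain ⟨a, ε, hproj, hok, hcp'⟩ := back hL hM' ((FO.free φ).erase z) f e
        (fun z'' hz'' => (hp z'' (hmem z'' hz'')).1)
        (fun z1 hz1 z2 hz2 => hc z1 (hmem z1 hz1) z2 (hmem z2 hz2)) pos'
      refine ⟨a, ?_⟩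
      rw [ih r' hr' hq' (Function.update f z a) (Function.update f' z pos')
        (Function.update e z ε) ?_ ?_]
      · exact hpos'
      · intro z'' hz''
        by_cases hzz : z'' = z
        · subst hzz
          refine ⟨by simpa using hok, by simp [hproj.symm]⟩
        · rw [Function.update_of_ne hzz, Function.update_of_ne hzz, Function.update_of_ne hzz]
          have hz''e : z'' ∈ (FO.free φ).erase z := Finset.mem_erase.mpr ⟨hzz, hz''⟩
          obtain ⟨ho, hf⟩ := hp z'' (hmem z'' hz''e)
          exact ⟨pok_mono (E_mono L (by omega)) ho, hf⟩
      · intro z1 hz1 z2 hz2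
        by_cases h1z : z1 = z <;> by_cases h2z : z2 = z
        · subst h1z; subst h2z; simp only [Function.update_self]; exact pcompat_refl _ _ _
        · subst h1z
          rw [Function.update_self, Function.update_self, Function.update_of_ne h2z,
            Function.update_of_ne h2z]
          exact hcp' z2 (Finset.mem_erase.mpr ⟨h2z, hz2⟩)
        · subst h2z
          rw [Function.update_self, Function.update_self, Function.update_of_ne h1z,
            Function.update_of_ne h1z]
          exact pcompat_symm (hcp' z1 (Finset.mem_erase.mpr ⟨h1z, hz1⟩))
        · rw [Function.update_of_ne h1z, Function.update_of_ne h1z,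
            Function.update_of_ne h2z, Function.update_of_ne h2z]
          exact pcompat_mono (E_mono L (by omega))
            (hc z1 (hmem z1 (Finset.mem_erase.mpr ⟨h1z, hz1⟩))
              z2 (hmem z2 (Finset.mem_erase.mpr ⟨h2z, hz2⟩)))

/-- The abstract core: if `w` and `w'` agree on an initial segment of length
`P + M` and agree up to a shift by `L` from position `P` on, with `M` large
enough, then `w ≡_N w'`. -/
lemma core (hL : 1 ≤ L) (N : ℕ) (hM : 2 ^ N * (L + 1) ≤ M)
    (h1 : ∀ q, q < P + M → w q = w' q) (h2 : ∀ q, P ≤ q → w (q + L) = w' q) :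
    FOEquiv N w w' := by
  intro φ hfree hq
  exact key hL h1 h2 N (by simp only [E]; omega) φ N le_rfl hq _ _ (fun _ => false)
    (by simp [hfree]) (by simp [hfree])

end Game

end StutterAux

lemma FOEquiv.refl {n : ℕ} {w : ℕ → Γ} : FOEquiv n w w := fun _ _ _ => Iff.rfl

lemma FOEquiv.symm {n : ℕ} {w w' : ℕ → Γ} (h : FOEquiv n w w') : FOEquiv n w' w :=
  fun φ h1 h2 => (h φ h1 h2).symm

lemma FOEquiv.trans {n : ℕ} {w w' w'' : ℕ → Γ} (h : FOEquiv n w w')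
    (h' : FOEquiv n w' w'') : FOEquiv n w w'' :=
  fun φ h1 h2 => (h φ h1 h2).trans (h' φ h1 h2)

lemma lpow_length (u : List Γ) (m : ℕ) : (lpow u m).length = m * u.length := by
  induction m with
  | zero => simp [lpow]
  | succ m ih => simp [lpow, ih]; ring

lemma lpow_succ_right (u : List Γ) (m : ℕ) : lpow u (m + 1) = lpow u m ++ u := by
  induction m with
  | zero => simp [lpow]
  | succ m ih =>
    show u ++ lpow u (m + 1) = (u ++ lpow u m) ++ u
    rw [ih]; simp

lemma wcat_lt {u : List Γ} {w : ℕ → Γ} {q : ℕ} (h : q < u.length) :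
    wcat u w q = u.get ⟨q, h⟩ := dif_pos h

lemma wcat_ge {u : List Γ} {w : ℕ → Γ} {q : ℕ} (h : u.length ≤ q) :
    wcat u w q = w (q - u.length) := dif_neg (by omega)

lemma wcat_prefix_eq (X Y1 Y2 : List Γ) (t1 t2 : ℕ → Γ) {q : ℕ} (h : q < X.length) :
    wcat (X ++ Y1) t1 q = wcat (X ++ Y2) t2 q := by
  rw [wcat_lt (by simp; omega), wcat_lt (by simp; omega)]
  simp [List.get_eq_getElem]
  rw [List.getElem_append_left h, List.getElem_append_left h]

lemma wcat_append (X Y : List Γ) (t : ℕ → Γ) :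
    wcat (X ++ Y) t = wcat X (wcat Y t) := by
  funext q
  rcases lt_or_ge q X.length with h | h
  · rw [wcat_lt (by simp; omega), wcat_lt h]
    simp [List.get_eq_getElem, List.getElem_append_left h]
  · rw [wcat_ge (u := X) h]
    rcases lt_or_ge q (X.length + Y.length) with h2 | h2
    · rw [wcat_lt (by simp; omega), wcat_lt (by omega)]
      simp [List.get_eq_getElem]
      rw [List.getElem_append_right (by omega)]
    · rw [wcat_ge (by simp; omega), wcat_ge (by omega)]
      congr 1
      simp; omega

/-- Pumping one copy of the loop `lw`. -/
lemma step_word (N : ℕ) (A D lw : List Γ) (hlw : lw ≠ []) (t : ℕ → Γ) (c : ℕ)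
    (hc : 2 ^ (N + 1) ≤ c) :
    FOEquiv N (wcat (A ++ (lpow lw (c + 1) ++ D)) t) (wcat (A ++ (lpow lw c ++ D)) t) := by
  have hL : 1 ≤ lw.length := List.length_pos_iff.mpr hlw
  have hM : 2 ^ N * (lw.length + 1) ≤ c * lw.length := by
    have h2 : 2 ^ N ≤ 2 ^ N * lw.length := Nat.le_mul_of_pos_right _ (by omega)
    have h3 : 2 ^ (N + 1) * lw.length ≤ c * lw.length := Nat.mul_le_mul_right _ hc
    have h4 : 2 ^ (N + 1) * lw.length = 2 ^ N * lw.length + 2 ^ N * lw.length := by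
      rw [pow_succ]; ring
    have h5 : 2 ^ N * (lw.length + 1) = 2 ^ N * lw.length + 2 ^ N := by ring
    omega
  apply StutterAux.core (P := A.length) (L := lw.length) (M := c * lw.length) hL N hM
  · intro q hq
    have e1 : A ++ (lpow lw (c + 1) ++ D) = (A ++ lpow lw c) ++ (lw ++ D) := by
      rw [lpow_succ_right]; simp
    have e2 : A ++ (lpow lw c ++ D) = (A ++ lpow lw c) ++ D := by simp
    rw [e1, e2]
    exact wcat_prefix_eq _ _ _ _ _ (by simp [lpow_length]; omega)
  · intro q hq
    have e1 : A ++ (lpow lw (c + 1) ++ D) = A ++ (lw ++ (lpow lw c ++ D)) := by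
      show A ++ ((lw ++ lpow lw c) ++ D) = _
      simp
    rw [e1, wcat_append, wcat_append (X := A)]
    rw [wcat_ge (u := A) (by omega), wcat_ge (u := A) (by omega), wcat_append]
    have h3 : lw.length ≤ q + lw.length - A.length := by omega
    rw [wcat_ge h3]
    congr 1
    omega

/-- Changing the number of copies of the loop `lw`, provided the truncated
counts agree. -/
lemma many_word (N : ℕ) (A D lw : List Γ) (hlw : lw ≠ []) (t : ℕ → Γ) (c c' : ℕ)
    (h : min c (2 ^ (N + 1) + 1) = min c' (2 ^ (N + 1) + 1)) :
    FOEquiv N (wcat (A ++ (lpow lw c ++ D)) t) (wcat (A ++ (lpow lw c' ++ D)) t) := by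
  have up : ∀ c₀ d, 2 ^ (N + 1) ≤ c₀ →
      FOEquiv N (wcat (A ++ (lpow lw (c₀ + d) ++ D)) t) (wcat (A ++ (lpow lw c₀ ++ D)) t) := by
    intro c₀ d hc₀
    induction d with
    | zero => exact FOEquiv.refl
    | succ d ih =>
      have := step_word N A D lw hlw t (c₀ + d) (by omega)
      exact (show c₀ + (d + 1) = (c₀ + d) + 1 by omega) ▸ this.trans ih
  rcases eq_or_ne c c' with rfl | hne
  · exact FOEquiv.refl
  · have hboth : 2 ^ (N + 1) + 1 ≤ c ∧ 2 ^ (N + 1) + 1 ≤ c' := by omega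
    rcases le_total c c' with hle | hle
    · have := up c (c' - c) (by omega)
      rw [show c + (c' - c) = c' by omega] at this
      exact this.symm
    · have := up c' (c - c') (by omega)
      rw [show c' + (c - c') = c by omega] at this
      exact this

lemma schemaPrefix_congr (p l : ℕ → List Γ) (n n' : ℕ → ℕ) (j : ℕ)
    (h : ∀ i, i < j → n i = n' i) : schemaPrefix p l n j = schemaPrefix p l n' j := by
  induction j with
  | zero => rfl
  | succ j ih =>
    show schemaPrefix p l n j ++ (p j ++ lpow (l j) (n j)) = _
    rw [ih (fun i hi => h i (by omega)), h j (by omega)]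
    rfl

lemma schemaPrefix_split (p l : ℕ → List Γ) (n : ℕ → ℕ) (j d : ℕ) :
    schemaPrefix p l n (j + d) = schemaPrefix p l n j ++
      schemaPrefix (fun i => p (j + i)) (fun i => l (j + i)) (fun i => n (j + i)) d := by
  induction d with
  | zero => simp [schemaPrefix]
  | succ d ih =>
    show schemaPrefix p l n (j + d) ++ (p (j + d) ++ lpow (l (j + d)) (n (j + d))) = _
    rw [ih]
    show _ = schemaPrefix p l n j ++
      (schemaPrefix (fun i => p (j + i)) (fun i => l (j + i)) (fun i => n (j + i)) d ++
        (p (j + d) ++ lpow (l (j + d)) (n (j + d))))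
    simp [List.append_assoc]

lemma prefix_decomp (p l : ℕ → List Γ) (nn : ℕ → ℕ) (j K : ℕ) (hj : j < K) :
    schemaPrefix p l nn K = (schemaPrefix p l nn j ++ p j) ++ (lpow (l j) (nn j) ++
      schemaPrefix (fun i => p (j + 1 + i)) (fun i => l (j + 1 + i)) (fun i => nn (j + 1 + i))
        (K - (j + 1))) := by
  conv_lhs => rw [show K = (j + 1) + (K - (j + 1)) by omega]
  rw [schemaPrefix_split p l nn (j + 1) (K - (j + 1))]
  show (schemaPrefix p l nn j ++ (p j ++ lpow (l j) (nn j))) ++ _ = _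
  simp [List.append_assoc]

lemma change_one (N k : ℕ) (p l : ℕ → List Γ) (h : l (k - 1) ≠ []) (j : ℕ) (hj : j < k - 1)
    (hlj : l j ≠ []) (n1 n2 : ℕ → ℕ) (hagree : ∀ i, i ≠ j → n1 i = n2 i)
    (hmin : min (n1 j) (2 ^ (N + 1) + 1) = min (n2 j) (2 ^ (N + 1) + 1)) :
    FOEquiv N (schemaWord k p l n1 h) (schemaWord k p l n2 h) := by
  unfold schemaWord
  rw [prefix_decomp p l n1 j (k - 1) hj, prefix_decomp p l n2 j (k - 1) hj]
  have e2 : schemaPrefix p l n2 j = schemaPrefix p l n1 j :=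
    schemaPrefix_congr p l n2 n1 j (fun i hi => (hagree i (by omega)).symm)
  have e3 : schemaPrefix (fun i => p (j + 1 + i)) (fun i => l (j + 1 + i))
        (fun i => n2 (j + 1 + i)) (k - 1 - (j + 1)) =
      schemaPrefix (fun i => p (j + 1 + i)) (fun i => l (j + 1 + i))
        (fun i => n1 (j + 1 + i)) (k - 1 - (j + 1)) :=
    schemaPrefix_congr _ _ _ _ _ (fun i _ => (hagree (j + 1 + i) (by omega)).symm)
  rw [e2, e3]
  have reassoc : ∀ (c : ℕ),
      ((schemaPrefix p l n1 j ++ p j) ++ (lpow (l j) c ++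
        schemaPrefix (fun i => p (j + 1 + i)) (fun i => l (j + 1 + i))
          (fun i => n1 (j + 1 + i)) (k - 1 - (j + 1)))) ++ p (k - 1) =
      (schemaPrefix p l n1 j ++ p j) ++ (lpow (l j) c ++
        (schemaPrefix (fun i => p (j + 1 + i)) (fun i => l (j + 1 + i))
          (fun i => n1 (j + 1 + i)) (k - 1 - (j + 1)) ++ p (k - 1))) := by
    intro c; simp [List.append_assoc]
  rw [reassoc, reassoc]
  exact many_word N _ _ _ hlj _ _ _ hmin

/-- If the loop-iteration counts `n` and `n'` agree after truncation at
`T = 2^(N+1) + 1`, then the corresponding ω-words are `≡_N`-equivalent. -/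
theorem stuttering_fo_schema {Γ : Type*} [Fintype Γ] (N : ℕ) (hN : 1 ≤ N)
    (k : ℕ) (hk : 0 < k) (p l : ℕ → List Γ) (hl : ∀ i, i < k → l i ≠ [])
    (n n' : ℕ → ℕ)
    (hmin : ∀ i, i < k - 1 →
      min (n i) (2 ^ (N + 1) + 1) = min (n' i) (2 ^ (N + 1) + 1)) :
    FOEquiv N (schemaWord k p l n (hl (k - 1) (by omega)))
      (schemaWord k p l n' (hl (k - 1) (by omega))) := by
  set h := hl (k - 1) (by omega : k - 1 < k) with hh
  have wcongr : ∀ (n1 n2 : ℕ → ℕ), (∀ i, i < k - 1 → n1 i = n2 i) →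
      schemaWord k p l n1 h = schemaWord k p l n2 h := by
    intro n1 n2 hc
    unfold schemaWord
    rw [schemaPrefix_congr p l n1 n2 (k - 1) hc]
  set mix : ℕ → ℕ → ℕ := fun j i => if i < j then n' i else n i with hmix
  have chain : ∀ j, j ≤ k - 1 →
      FOEquiv N (schemaWord k p l (mix 0) h) (schemaWord k p l (mix j) h) := by
    intro j hjle
    induction j with
    | zero => exact FOEquiv.refl
    | succ j ih =>
      refine (ih (by omega)).trans ?_
      apply change_one N k p l h j (by omega) (hl j (by omega))
      · intro i hi
        simp only [hmix]
        rcases lt_trichotomy i j with h' | rfl | h'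
        · simp [h', Nat.lt_succ_of_lt h']
        · omega
        · rw [if_neg (by omega), if_neg (by omega)]
      · simp only [hmix, lt_irrefl, if_neg (lt_irrefl j), if_pos (Nat.lt_succ_self j)]
        exact hmin j (by omega)
  have e0 : schemaWord k p l n h = schemaWord k p l (mix 0) h :=
    wcongr n (mix 0) (fun i _ => by simp [hmix])
  have e1 : schemaWord k p l (mix (k - 1)) h = schemaWord k p l n' h :=
    wcongr (mix (k - 1)) n' (fun i hi => by simp [hmix, hi])
  have := (e0 ▸ (e1 ▸ chain (k - 1) le_rfl))
  exact this


end Stmt2
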